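/- Assume the optimal value function ν is a proper lower semi-continuous function and that dom ∂ν = dom ν. Then range ∂θ = S, i.e., the set of feasible shifts equals the set of all s ∈ Y such that s ∈ ∂θ(λ) for some λ ∈ Y. -/

import Mathlib

open Set Filter Topology Bornology Metric
open scoped RealInnerProductSpace

noncomputable section

variable {E : Type*} [NormedAddCommGroup E] [InnerProductSpace ℝ E]
variable {Y : Type*} [NormedAddCommGroup Y] [InnerProductSpace ℝ Y]

/-- The set of feasible shifts `S = {s | ∃ x, g x + s ∈ K}`. -/
def feasShifts (g : E → Y) (K : Set Y) : Set Y := {s | ∃ x, g x + s ∈ K}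

/-- The graph of the set-valued mapping `G_K(x) = -g(x) + K`,
i.e. `{(x, y) | g x + y ∈ K}`. -/
def gphGK (g : E → Y) (K : Set Y) : Set (E × Y) := {p | g p.1 + p.2 ∈ K}

/-- Recession cone of a convex set. -/
def recCone {Z : Type*} [AddCommGroup Z] [Module ℝ Z] (C : Set Z) : Set Z :=
  {d | ∀ z ∈ C, ∀ t : ℝ, 0 ≤ t → z + t • d ∈ C}

/-- Horizon (recession) function of a finite-valued function `f`. -/
def horizonFn (f : E → ℝ) (h : E) : EReal :=
  ⨆ t : {t : ℝ // 0 < t}, (((f ((t : ℝ) • h) - f 0) / (t : ℝ) : ℝ) : EReal)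

/-- The optimal value function `ν(s) = inf {f x : g x + s ∈ K}` of the shifted problem. -/
def valFn (f : E → ℝ) (g : E → Y) (K : Set Y) (s : Y) : EReal :=
  sInf ((fun x => (f x : EReal)) '' {x | g x + s ∈ K})

/-- The solution set `X(s)` of the shifted problem. -/
def solSet (f : E → ℝ) (g : E → Y) (K : Set Y) (s : Y) : Set E :=
  {x | g x + s ∈ K ∧ ∀ x', g x' + s ∈ K → f x ≤ f x'}

/-- The Lagrangian `l(x,y,λ) = f x + ⟨λ, g x - y⟩`. -/
def lagr (f : E → ℝ) (g : E → Y) (x : E) (y : Y) (l : Y) : ℝ :=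
  f x + ⟪l, g x - y⟫

/-- The augmented Lagrangian `l_r(x,y,λ) = f x + ⟨λ, g x - y⟩ + (r/2)‖g x - y‖²`. -/
def auglagr (f : E → ℝ) (g : E → Y) (r : ℝ) (x : E) (y : Y) (l : Y) : ℝ :=
  f x + ⟪l, g x - y⟫ + r / 2 * ‖g x - y‖ ^ 2

/-- The dual function `θ(λ) = - inf {l(x,y,λ) : x ∈ ℝⁿ, y ∈ K}`. -/
def dualFn (f : E → ℝ) (g : E → Y) (K : Set Y) (l : Y) : EReal :=
  - sInf ((fun p : E × Y => ((lagr f g p.1 p.2 l : ℝ) : EReal)) '' {p | p.2 ∈ K})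

/-- Fenchel conjugate of an extended-real-valued function. -/
def econj (h : Y → EReal) (l : Y) : EReal := ⨆ s : Y, (⟪l, s⟫ : EReal) - h s

/-- Convex subdifferential of an extended-real-valued function. -/
def esubdiff (h : Y → EReal) (s : Y) : Set Y :=
  {l | ∀ s', h s + (⟪l, s' - s⟫ : EReal) ≤ h s'}

/-- Convexity of an extended-real-valued function, via its epigraph. -/
def ERealConvexOn (h : Y → EReal) : Prop :=
  Convex ℝ {p : Y × ℝ | h p.1 ≤ (p.2 : EReal)}

/-- Properness of an extended-real-valued function. -/
def ERealProper (h : Y → EReal) : Prop := (∀ s, h s ≠ ⊥) ∧ ∃ s, h s ≠ ⊤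

/-- The optimal value `val(D(s)) = sup_λ [⟨s,λ⟩ - θ(λ)]` of the dual problem `D(s)`. -/
def dualVal (f : E → ℝ) (g : E → Y) (K : Set Y) (s : Y) : EReal :=
  ⨆ l : Y, (⟪s, l⟫ : EReal) - dualFn f g K l

/-- The solution set `Sol(D(s))` of the dual problem `D(s)`. -/
def dualSol (f : E → ℝ) (g : E → Y) (K : Set Y) (s : Y) : Set Y :=
  {l | ∀ l', (⟪s, l'⟫ : EReal) - dualFn f g K l' ≤ (⟪s, l⟫ : EReal) - dualFn f g K l}

/-- The set of proximal points `argmin_{λ'} [h(λ') + ‖λ' - λ‖²/(2r)]`. -/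
def proxSet (h : Y → EReal) (r : ℝ) (l : Y) : Set Y :=
  {m | ∀ m', h m + ((‖m - l‖ ^ 2 / (2 * r) : ℝ) : EReal) ≤
      h m' + ((‖m' - l‖ ^ 2 / (2 * r) : ℝ) : EReal)}

/-- The Moreau–Yosida regularization `h_r(λ) = inf_{λ'} [h(λ') + ‖λ' - λ‖²/(2r)]`. -/
def moreau (h : Y → EReal) (r : ℝ) (l : Y) : EReal :=
  ⨅ m : Y, (h m + ((‖m - l‖ ^ 2 / (2 * r) : ℝ) : EReal))

section AuxLemmas
set_option linter.unusedSectionVars false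

lemma EReal_exists_real {x : EReal} (h1 : x ≠ ⊥) (h2 : x ≠ ⊤) : ∃ a : ℝ, x = (a:EReal) := by
  induction x using EReal.rec with
  | bot => exact absurd rfl h1
  | coe a => exact ⟨a, rfl⟩
  | top => exact absurd rfl h2

variable {E : Type*} [NormedAddCommGroup E] [InnerProductSpace ℝ E]
variable {Y : Type*} [NormedAddCommGroup Y] [InnerProductSpace ℝ Y]
variable {f : E → ℝ} {g : E → Y} {K : Set Y}

lemma valFn_le {s : Y} {x : E} (hx : g x + s ∈ K) : valFn f g K s ≤ ((f x : ℝ) : EReal) :=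
  sInf_le ⟨x, hx, rfl⟩

lemma feas_of_valFn_ne_top {s : Y} (h : valFn f g K s ≠ ⊤) : ∃ x, g x + s ∈ K := by
  by_contra hc
  push_neg at hc
  apply h
  have : {x : E | g x + s ∈ K} = ∅ := Set.eq_empty_iff_forall_notMem.2 hc
  rw [valFn, this, Set.image_empty, sInf_empty]

lemma valFn_ne_top_of_feas {s : Y} {x : E} (hx : g x + s ∈ K) : valFn f g K s ≠ ⊤ := by
  intro h
  have := valFn_le (f := f) hx
  rw [h, top_le_iff] at this
  exact EReal.coe_ne_top _ this

lemma dualFn_lower (l : Y) {s : Y} {x : E} (hx : g x + s ∈ K) :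
    ((⟪l, s⟫ - f x : ℝ) : EReal) ≤ dualFn f g K l := by
  have h1 : sInf ((fun p : E × Y => ((lagr f g p.1 p.2 l : ℝ) : EReal)) '' {p | p.2 ∈ K})
      ≤ ((lagr f g x (g x + s) l : ℝ) : EReal) := sInf_le ⟨(x, g x + s), hx, rfl⟩
  have h2 : lagr f g x (g x + s) l = f x - ⟪l, s⟫ := by
    simp [lagr, inner_sub_right]
    ring
  rw [dualFn]
  have : (↑(⟪l, s⟫ - f x) : EReal) = -(↑(f x - ⟪l, s⟫) : EReal) := by
    rw [← EReal.coe_neg, neg_sub]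
  rw [this, EReal.neg_le, neg_neg]
  rw [h2] at h1; exact h1

lemma dualFn_upper {l : Y} {M : ℝ} (h : ∀ (x : E) (y : Y), y ∈ K → ⟪l, y - g x⟫ - f x ≤ M) :
    dualFn f g K l ≤ (M : EReal) := by
  rw [dualFn, EReal.neg_le]
  apply le_sInf
  rintro b ⟨⟨x, y⟩, hy, rfl⟩
  rw [← EReal.coe_neg, EReal.coe_le_coe_iff]
  have h2 : lagr f g x y l = f x - ⟪l, y - g x⟫ := by
    have h3 : (g x - y) = -(y - g x) := by abel
    rw [lagr, h3, inner_neg_right]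
    ring
  rw [h2]
  have := h x y hy
  linarith

lemma subgrad_pointwise {l₀ : Y} {s₀ : Y} {a₀ : ℝ}
    (hbot : ∀ s, valFn f g K s ≠ ⊥)
    (hsub : l₀ ∈ esubdiff (valFn f g K) s₀) (ha : valFn f g K s₀ = (a₀ : EReal)) :
    ∀ (x : E) (y : Y), y ∈ K → ⟪l₀, y - g x⟫ - f x ≤ ⟪l₀, s₀⟫ - a₀ := by
  intro x y hy
  set s' := y - g x with hs'
  have hfeas : g x + s' ∈ K := by rw [hs']; simpa using hy
  have hle : valFn f g K s' ≤ ((f x : ℝ) : EReal) := valFn_le hfeas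
  obtain ⟨v, hv⟩ := EReal_exists_real (hbot s') (valFn_ne_top_of_feas hfeas)
  rw [hv, EReal.coe_le_coe_iff] at hle
  have hsg := hsub s'
  rw [ha, hv, ← EReal.coe_add, EReal.coe_le_coe_iff] at hsg
  have : ⟪l₀, s' - s₀⟫ = ⟪l₀, s'⟫ - ⟪l₀, s₀⟫ := inner_sub_right l₀ s' s₀
  linarith

lemma dualFn_le_of_subgrad {l₀ : Y} {s₀ : Y} {a₀ : ℝ}
    (hbot : ∀ s, valFn f g K s ≠ ⊥)
    (hsub : l₀ ∈ esubdiff (valFn f g K) s₀) (ha : valFn f g K s₀ = (a₀ : EReal)) :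
    dualFn f g K l₀ ≤ ((⟪l₀, s₀⟫ - a₀ : ℝ) : EReal) :=
  dualFn_upper (subgrad_pointwise hbot hsub ha)

lemma dualFn_ge_of_val {l : Y} {s : Y} {a : ℝ} (ha : valFn f g K s = (a : EReal)) :
    ((⟪l, s⟫ - a : ℝ) : EReal) ≤ dualFn f g K l := by
  obtain ⟨x₀, hx₀⟩ := feas_of_valFn_ne_top (by rw [ha]; exact EReal.coe_ne_top a)
  have hnbot : dualFn f g K l ≠ ⊥ := by
    intro h
    have := dualFn_lower (f := f) l hx₀
    rw [h, le_bot_iff] at this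
    exact EReal.coe_ne_bot _ this
  rcases eq_or_ne (dualFn f g K l) ⊤ with htop | hnt
  · rw [htop]; exact le_top
  obtain ⟨b, hb⟩ := EReal_exists_real hnbot hnt
  rw [hb, EReal.coe_le_coe_iff]
  have hkey : ∀ x : E, g x + s ∈ K → (⟪l, s⟫ - b : ℝ) ≤ f x := by
    intro x hx
    have := dualFn_lower (f := f) l hx
    rw [hb, EReal.coe_le_coe_iff] at this
    linarith
  have : ((⟪l, s⟫ - b : ℝ) : EReal) ≤ valFn f g K s := by
    apply le_sInf
    rintro e ⟨x, hx, rfl⟩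
    exact EReal.coe_le_coe_iff.2 (hkey x hx)
  rw [ha, EReal.coe_le_coe_iff] at this
  linarith

end AuxLemmas
set_option linter.unusedSectionVars false in
lemma epi_convex {E : Type*} [NormedAddCommGroup E] [InnerProductSpace ℝ E]
    {Y : Type*} [NormedAddCommGroup Y] [InnerProductSpace ℝ Y]
    {f : E → ℝ} {g : E → Y} {K : Set Y}
    (hfconv : ConvexOn ℝ Set.univ f) (hgraph : Convex ℝ (gphGK g K)) :
    Convex ℝ {p : Y × ℝ | valFn f g K p.1 ≤ (p.2 : EReal)} := by
  rintro ⟨s1, t1⟩ h1 ⟨s2, t2⟩ h2 a b ha hb hab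
  simp only [Set.mem_setOf_eq, Prod.smul_mk, Prod.mk_add_mk, smul_eq_mul] at h1 h2 ⊢
  have key : ∀ ε : ℝ, 0 < ε →
      valFn f g K (a • s1 + b • s2) ≤ ((a * t1 + b * t2 + ε : ℝ) : EReal) := by
    intro ε hε
    have hex : ∀ (sv : Y) (t : ℝ), valFn f g K sv ≤ (t : EReal) →
        ∃ x, g x + sv ∈ K ∧ f x < t + ε := by
      intro sv t hst
      have hlt : valFn f g K sv < ((t + ε : ℝ) : EReal) :=
        lt_of_le_of_lt hst (EReal.coe_lt_coe_iff.2 (by linarith))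
      rw [valFn, sInf_lt_iff] at hlt
      obtain ⟨e, ⟨x, hx, rfl⟩, hlt⟩ := hlt
      exact ⟨x, hx, EReal.coe_lt_coe_iff.1 hlt⟩
    obtain ⟨x1, hx1, hf1⟩ := hex s1 t1 h1
    obtain ⟨x2, hx2, hf2⟩ := hex s2 t2 h2
    have hx1m : ((x1, s1) : E × Y) ∈ gphGK g K := hx1
    have hx2m : ((x2, s2) : E × Y) ∈ gphGK g K := hx2
    have hg : g (a • x1 + b • x2) + (a • s1 + b • s2) ∈ K := by
      have := hgraph hx1m hx2m ha hb hab
      simpa [gphGK, Prod.smul_mk, Prod.mk_add_mk] using this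
    have hfx : f (a • x1 + b • x2) ≤ a * f x1 + b * f x2 :=
      hfconv.2 (Set.mem_univ x1) (Set.mem_univ x2) ha hb hab
    refine (valFn_le hg).trans (EReal.coe_le_coe_iff.2 ?_)
    nlinarith [mul_le_mul_of_nonneg_left hf1.le ha, mul_le_mul_of_nonneg_left hf2.le hb]
  by_contra hc
  push_neg at hc
  obtain ⟨r, hr1, hr2⟩ := EReal.lt_iff_exists_real_btwn.1 hc
  have hε : (0 : ℝ) < r - (a * t1 + b * t2) := by
    have := EReal.coe_lt_coe_iff.1 hr1; linarith
  have := key _ hε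
  rw [show a * t1 + b * t2 + (r - (a * t1 + b * t2)) = r by ring] at this
  exact absurd (lt_of_lt_of_le hr2 this) (lt_irrefl _)
/-- Proposition 3.4: if `ν` is proper lsc and `dom ∂ν = dom ν`, then
`range ∂θ = S`. -/
theorem range_subdiff_dualFn_eq_feasShifts {n : ℕ} {Y : Type*} [NormedAddCommGroup Y]
    [InnerProductSpace ℝ Y] [FiniteDimensional ℝ Y]
    (f : EuclideanSpace ℝ (Fin n) → ℝ) (g : EuclideanSpace ℝ (Fin n) → Y) (K : Set Y)
    (hfconv : ConvexOn ℝ Set.univ f)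
    (hKne : K.Nonempty) (hKclosed : IsClosed K) (hKconv : Convex ℝ K)
    (hgraph : Convex ℝ (gphGK g K))
    (hproper : ERealProper (valFn f g K)) (hlsc : LowerSemicontinuous (valFn f g K))
    (hdomeq : {s | (esubdiff (valFn f g K) s).Nonempty} = {s | valFn f g K s ≠ ⊤}) :
    {s | ∃ l, s ∈ esubdiff (dualFn f g K) l} = feasShifts g K := by
  ext s
  simp only [Set.mem_setOf_eq]
  constructor
  · rintro ⟨l, hl⟩
    by_contra hs
    have hνs : valFn f g K s = ⊤ := by
      by_contra h
      exact hs (feas_of_valFn_ne_top h)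
    obtain ⟨s₀, hs₀⟩ := hproper.2
    obtain ⟨a₀, ha₀⟩ := EReal_exists_real (hproper.1 s₀) hs₀
    obtain ⟨x₀, hx₀⟩ := feas_of_valFn_ne_top hs₀
    have hs₀mem : s₀ ∈ {s | (esubdiff (valFn f g K) s).Nonempty} := by
      rw [hdomeq]; exact hs₀
    obtain ⟨lam₀, hlam₀⟩ := hs₀mem
    have hθlam₀ : dualFn f g K lam₀ ≤ ((⟪lam₀, s₀⟫ - a₀ : ℝ) : EReal) :=
      dualFn_le_of_subgrad hproper.1 hlam₀ ha₀
    have hnbot : dualFn f g K l ≠ ⊥ := by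
      intro h
      have := dualFn_lower (f := f) l hx₀
      rw [h, le_bot_iff] at this
      exact EReal.coe_ne_bot _ this
    have hntop : dualFn f g K l ≠ ⊤ := by
      intro h
      have h2 := hl lam₀
      rw [h, EReal.top_add_coe] at h2
      exact EReal.coe_ne_top _ (top_le_iff.1 (h2.trans hθlam₀))
    obtain ⟨b, hb⟩ := EReal_exists_real hnbot hntop
    set c : ℝ := ⟪s, l⟫ - b with hc
    have hlow : ∀ l' : Y, ((⟪s, l'⟫ - c : ℝ) : EReal) ≤ dualFn f g K l' := by
      intro l'
      have h2 := hl l'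
      rw [hb, ← EReal.coe_add] at h2
      have h3 : b + ⟪s, l' - l⟫ = ⟪s, l'⟫ - c := by
        rw [inner_sub_right, hc]; ring
      rwa [h3] at h2
    have hconv : Convex ℝ {p : Y × ℝ | valFn f g K p.1 ≤ (p.2 : EReal)} :=
      epi_convex hfconv hgraph
    have hclosed : IsClosed {p : Y × ℝ | valFn f g K p.1 ≤ (p.2 : EReal)} := by
      have h1 : IsClosed {p : Y × EReal | valFn f g K p.1 ≤ p.2} := hlsc.isClosed_epigraph
      have h2 : Continuous (fun p : Y × ℝ => (p.1, (p.2 : EReal))) :=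
        continuous_fst.prodMk (continuous_coe_real_ereal.comp continuous_snd)
      exact h1.preimage h2
    have hnotmem : (s, c) ∉ {p : Y × ℝ | valFn f g K p.1 ≤ (p.2 : EReal)} := by
      intro h
      simp only [Set.mem_setOf_eq, hνs, top_le_iff] at h
      exact EReal.coe_ne_top c h
    obtain ⟨φ, u, hpu, hsep⟩ := geometric_hahn_banach_point_closed hconv hclosed hnotmem
    obtain ⟨w, hw⟩ : ∃ w : Y, ∀ y : Y, ⟪w, y⟫ = φ (y, 0) :=
      ⟨(InnerProductSpace.toDual ℝ Y).symm (φ.comp (ContinuousLinearMap.inl ℝ Y ℝ)),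
        fun y => by simp [InnerProductSpace.toDual_symm_apply]⟩
    set α : ℝ := φ (0, 1) with hαdef
    have hφ : ∀ (y : Y) (t : ℝ), φ (y, t) = ⟪w, y⟫ + t * α := by
      intro y t
      have h0 : ((y, t) : Y × ℝ) = (y, 0) + t • ((0 : Y), (1 : ℝ)) := by
        simp [Prod.ext_iff]
      rw [h0, map_add, map_smul, smul_eq_mul, hw]
    have hepimem : ∀ (x : EuclideanSpace ℝ (Fin n)) (y : Y), y ∈ K →
        u < ⟪w, y - g x⟫ + f x * α := by
      intro x y hy
      have hfeas : g x + (y - g x) ∈ K := by simpa using hy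
      have hmem : (y - g x, f x) ∈ {p : Y × ℝ | valFn f g K p.1 ≤ (p.2 : EReal)} :=
        valFn_le hfeas
      have := hsep _ hmem
      rwa [hφ] at this
    have hpoint : ⟪w, s⟫ + c * α < u := by
      have := hpu; rwa [hφ] at this
    have hαnn : 0 ≤ α := by
      by_contra hneg
      push_neg at hneg
      set q : ℝ := (u - ⟪w, s₀⟫) / α with hq
      set t : ℝ := max 0 (q - a₀ + 1) with ht
      have htmem : (s₀, a₀ + t) ∈ {p : Y × ℝ | valFn f g K p.1 ≤ (p.2 : EReal)} := by
        simp only [Set.mem_setOf_eq, ha₀]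
        exact EReal.coe_le_coe_iff.2 (by have := le_max_left 0 (q - a₀ + 1); linarith)
      have hs1 := hsep _ htmem
      rw [hφ] at hs1
      have h4 : q < a₀ + t := by
        have := le_max_right 0 (q - a₀ + 1); linarith
      have h5 : (a₀ + t) * α < q * α := mul_lt_mul_of_neg_right h4 hneg
      rw [hq, div_mul_cancel₀ _ (ne_of_lt hneg)] at h5
      linarith
    rcases hαnn.eq_or_lt with hα0 | hαpos
    · -- α = 0
      have hβ := subgrad_pointwise (f := f) hproper.1 hlam₀ ha₀
      have hus : ⟪w, s⟫ < u := by
        have := hpoint; rw [← hα0] at this; linarith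
      have husd : ∀ (x : EuclideanSpace ℝ (Fin n)) (y : Y), y ∈ K → u < ⟪w, y - g x⟫ := by
        intro x y hy
        have := hepimem x y hy; rw [← hα0] at this; linarith
      set β₀ : ℝ := ⟪lam₀, s₀⟫ - a₀ with hβ₀
      set t : ℝ := max 0 ((β₀ - ⟪s, lam₀⟫ + c) / (u - ⟪w, s⟫) + 1) with ht
      have htnn : 0 ≤ t := le_max_left _ _
      set l' : Y := lam₀ + t • (-w) with hl'
      have hub : dualFn f g K l' ≤ ((β₀ - t * u : ℝ) : EReal) := by
        apply dualFn_upper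
        intro x y hy
        have h1 := hβ x y hy
        have h2 := husd x y hy
        have h3 : ⟪l', y - g x⟫ = ⟪lam₀, y - g x⟫ + t * (-⟪w, y - g x⟫) := by
          rw [hl', inner_add_left, real_inner_smul_left, inner_neg_left]
          try ring
        have h4 : t * (-⟪w, y - g x⟫) ≤ t * (-u) :=
          mul_le_mul_of_nonneg_left (by linarith) htnn
        rw [h3]; linarith
      have hR : (⟪s, l'⟫ - c : ℝ) ≤ β₀ - t * u :=
        EReal.coe_le_coe_iff.1 ((hlow l').trans hub)
      have h6 : ⟪s, l'⟫ = ⟪s, lam₀⟫ - t * ⟪w, s⟫ := by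
        rw [hl', inner_add_right, real_inner_smul_right, inner_neg_right, real_inner_comm s w]
        try ring
      rw [h6] at hR
      have hpos : 0 < u - ⟪w, s⟫ := by linarith
      have h8 : (β₀ - ⟪s, lam₀⟫ + c) / (u - ⟪w, s⟫) + 1 ≤ t := le_max_right _ _
      have h9 : (β₀ - ⟪s, lam₀⟫ + c) + (u - ⟪w, s⟫) ≤ t * (u - ⟪w, s⟫) := by
        have := mul_le_mul_of_nonneg_right h8 hpos.le
        rwa [add_mul, one_mul, div_mul_cancel₀ _ (ne_of_gt hpos)] at this
      nlinarith
    · -- α > 0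
      set iu : ℝ := α⁻¹ with hiudef
      have hiu : α * iu = 1 := mul_inv_cancel₀ (ne_of_gt hαpos)
      have hiupos : 0 < iu := inv_pos.2 hαpos
      set l' : Y := (-iu) • w with hl'
      have hub : dualFn f g K l' ≤ ((-(iu * u) : ℝ) : EReal) := by
        apply dualFn_upper
        intro x y hy
        have h2 := hepimem x y hy
        have h3 : ⟪l', y - g x⟫ = -iu * ⟪w, y - g x⟫ := by
          rw [hl', real_inner_smul_left]
        have h7 : iu * (f x * α) = f x := by
          rw [mul_comm (f x) α, ← mul_assoc, mul_comm iu α, hiu, one_mul]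
        have h8 := mul_lt_mul_of_pos_left h2 hiupos
        rw [mul_add, h7] at h8
        rw [h3]; linarith
      have hR : (⟪s, l'⟫ - c : ℝ) ≤ -(iu * u) :=
        EReal.coe_le_coe_iff.1 ((hlow l').trans hub)
      have h3 : ⟪s, l'⟫ = -iu * ⟪w, s⟫ := by
        rw [hl', real_inner_smul_right, real_inner_comm s w]
      have h7 : iu * (c * α) = c := by
        rw [mul_comm c α, ← mul_assoc, mul_comm iu α, hiu, one_mul]
      have h8 := mul_lt_mul_of_pos_left hpoint hiupos
      rw [mul_add, h7] at h8
      rw [h3] at hR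
      linarith
  · intro hs
    obtain ⟨x₀, hx₀⟩ := hs
    obtain ⟨a, ha⟩ := EReal_exists_real (hproper.1 s) (valFn_ne_top_of_feas hx₀)
    have hsmem : s ∈ {s | (esubdiff (valFn f g K) s).Nonempty} := by
      rw [hdomeq]; exact valFn_ne_top_of_feas hx₀
    obtain ⟨l, hl⟩ := hsmem
    refine ⟨l, fun l' => ?_⟩
    have h1 : dualFn f g K l ≤ ((⟪l, s⟫ - a : ℝ) : EReal) := dualFn_le_of_subgrad hproper.1 hl ha
    have h2 : ((⟪l', s⟫ - a : ℝ) : EReal) ≤ dualFn f g K l' := dualFn_ge_of_val ha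
    calc dualFn f g K l + ((⟪s, l' - l⟫ : ℝ) : EReal)
        ≤ ((⟪l, s⟫ - a : ℝ) : EReal) + ((⟪s, l' - l⟫ : ℝ) : EReal) := add_le_add_left h1 _
      _ = ((⟪l', s⟫ - a : ℝ) : EReal) := by
          rw [← EReal.coe_add]
          congr 1
          rw [inner_sub_right, real_inner_comm s l', real_inner_comm s l]
          ring
      _ ≤ dualFn f g K l' := h2
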